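/- Let H be a complex Hilbert space with inner product ⟨·,·⟩ linear in its first argument, let ψ₁, …, ψ_N, φ₁, …, φ_N ∈ H, and let g ∈ ℂ^N be such that Σ_j g_jψ_j ≠ 0. Suppose G⁽ᴹ⁾, A⁽ᴹ⁾, L⁽ᴹ⁾ ∈ ℂ^{N×N} are sequences of matrices (indexed by M) such that lim_{M→∞} G⁽ᴹ⁾_{jk} = ⟨ψ_k, ψ_j⟩, lim_{M→∞} A⁽ᴹ⁾_{jk} = ⟨φ_k, ψ_j⟩ and lim_{M→∞} L⁽ᴹ⁾_{jk} = ⟨φ_k, φ_j⟩ for all 1 ≤ j, k ≤ N. Then for every λ ∈ ℂ, lim_{M→∞} [g*(L⁽ᴹ⁾ − λ(A⁽ᴹ⁾)* − conj(λ)A⁽ᴹ⁾ + |λ|²G⁽ᴹ⁾)g] / (g*G⁽ᴹ⁾g) = ‖Σ_j g_jφ_j − λΣ_j g_jψ_j‖² / ‖Σ_j g_jψ_j‖². In particular, taking φ_j = Kψ_j for the Koopman operator K, the ResDMD residual computed from quadrature data converges, as the data size M → ∞, to the exact infinite-dimensional relative residual ‖(K − λI)g‖²/‖g‖² of the observable g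 = Σ_j g_jψ_j. -/

import Mathlib

open scoped Matrix
open Filter

lemma quad_eq_inner {H : Type*} [NormedAddCommGroup H] [InnerProductSpace ℂ H]
    {N : ℕ} (x y : Fin N → H) (g : Fin N → ℂ) :
    dotProduct (star g)
        ((Matrix.of fun j k => (inner ℂ (x j) (y k) : ℂ)).mulVec g) =
      (inner ℂ (∑ j, g j • x j) (∑ k, g k • y k) : ℂ) := by
  simp [dotProduct, Matrix.mulVec, sum_inner, inner_sum, inner_smul_left,
    inner_smul_right, Finset.mul_sum]
  rw [Finset.sum_comm]
  exact Finset.sum_congr rfl fun j _ => Finset.sum_congr rfl fun k _ => by ring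

lemma quad_tendsto {N : ℕ} (g : Fin N → ℂ) (X : ℕ → Matrix (Fin N) (Fin N) ℂ)
    (ℓ : Matrix (Fin N) (Fin N) ℂ)
    (h : ∀ j k, Tendsto (fun M => X M j k) atTop (nhds (ℓ j k))) :
    Tendsto (fun M => dotProduct (star g) ((X M).mulVec g)) atTop
      (nhds (dotProduct (star g) (ℓ.mulVec g))) := by
  simp only [dotProduct, Matrix.mulVec]
  apply tendsto_finset_sum
  intro j _
  apply Tendsto.const_mul
  apply tendsto_finset_sum
  intro k _
  exact (h j k).mul_const _

theorem resdmd_residual_large_data_limit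
    {H : Type*} [NormedAddCommGroup H] [InnerProductSpace ℂ H]
    {N : ℕ} (ψ φ : Fin N → H)
    (g : Fin N → ℂ) (hg : ∑ j, g j • ψ j ≠ 0)
    (G A L : ℕ → Matrix (Fin N) (Fin N) ℂ)
    (hG : ∀ j k, Tendsto (fun M => G M j k) atTop (nhds (inner ℂ (ψ j) (ψ k) : ℂ)))
    (hA : ∀ j k, Tendsto (fun M => A M j k) atTop (nhds (inner ℂ (ψ j) (φ k) : ℂ)))
    (hL : ∀ j k, Tendsto (fun M => L M j k) atTop (nhds (inner ℂ (φ j) (φ k) : ℂ))) :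
    ∀ lam : ℂ,
      Tendsto (fun M =>
          dotProduct (star g)
              ((L M - lam • (A M)ᴴ - (starRingEnd ℂ lam) • A M +
                ((‖lam‖ ^ 2 : ℝ) : ℂ) • G M).mulVec g) /
            dotProduct (star g) ((G M).mulVec g))
        atTop
        (nhds (((‖(∑ j, g j • φ j) - lam • ∑ j, g j • ψ j‖ ^ 2 /
          ‖∑ j, g j • ψ j‖ ^ 2 : ℝ)) : ℂ)) := by
  intro lam
  set a := ∑ j, g j • φ j with ha
  set b := ∑ j, g j • ψ j with hb
  set v := a - lam • b with hv
  -- the limit matrix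
  set ℓ : Matrix (Fin N) (Fin N) ℂ :=
    (Matrix.of fun j k => (inner ℂ (φ j) (φ k) : ℂ))
      - lam • (Matrix.of fun j k => (inner ℂ (φ j) (ψ k) : ℂ))
      - (starRingEnd ℂ lam) • (Matrix.of fun j k => (inner ℂ (ψ j) (φ k) : ℂ))
      + ((‖lam‖ ^ 2 : ℝ) : ℂ) • (Matrix.of fun j k => (inner ℂ (ψ j) (ψ k) : ℂ)) with hℓ
  -- entrywise convergence of the combined matrix
  have hentry : ∀ j k, Tendsto
      (fun M => (L M - lam • (A M)ᴴ - (starRingEnd ℂ lam) • A M +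
        ((‖lam‖ ^ 2 : ℝ) : ℂ) • G M) j k) atTop (nhds (ℓ j k)) := by
    intro j k
    have hAH : Tendsto (fun M => (A M)ᴴ j k) atTop (nhds (inner ℂ (φ j) (ψ k) : ℂ)) := by
      have := (hA k j).star
      simpa [Matrix.conjTranspose_apply, inner_conj_symm] using this
    have : Tendsto (fun M =>
        L M j k - lam * (A M)ᴴ j k - (starRingEnd ℂ lam) * A M j k +
          ((‖lam‖ ^ 2 : ℝ) : ℂ) * G M j k) atTop
        (nhds ((inner ℂ (φ j) (φ k) : ℂ) - lam * inner ℂ (φ j) (ψ k)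
          - (starRingEnd ℂ lam) * inner ℂ (ψ j) (φ k)
          + ((‖lam‖ ^ 2 : ℝ) : ℂ) * inner ℂ (ψ j) (ψ k))) :=
      (((hL j k).sub (hAH.const_mul lam)).sub ((hA j k).const_mul _)).add
        ((hG j k).const_mul _)
    simpa [hℓ, Matrix.sub_apply, Matrix.add_apply, Matrix.smul_apply, smul_eq_mul] using this
  -- numerator converges
  have hnum := quad_tendsto g _ ℓ hentry
  have hden := quad_tendsto g G (Matrix.of fun j k => (inner ℂ (ψ j) (ψ k) : ℂ)) hG
  -- identify the limits
  have hden_val : dotProduct (star g)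
      ((Matrix.of fun j k => (inner ℂ (ψ j) (ψ k) : ℂ)).mulVec g) = ((‖b‖ ^ 2 : ℝ) : ℂ) := by
    rw [quad_eq_inner, ← hb, @inner_self_eq_norm_sq_to_K ℂ]
    norm_cast
  have hnum_val : dotProduct (star g) (ℓ.mulVec g) = ((‖v‖ ^ 2 : ℝ) : ℂ) := by
    have expand : dotProduct (star g) (ℓ.mulVec g) =
        (inner ℂ a a : ℂ) - lam * inner ℂ a b - (starRingEnd ℂ lam) * inner ℂ b a
          + ((‖lam‖ ^ 2 : ℝ) : ℂ) * inner ℂ b b := by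
      simp only [hℓ, Matrix.sub_mulVec, Matrix.add_mulVec, Matrix.smul_mulVec,
        dotProduct_sub, dotProduct_add, dotProduct_smul,
        smul_eq_mul, quad_eq_inner, ha, hb]
    have hvv : (inner ℂ v v : ℂ) = ((‖v‖ ^ 2 : ℝ) : ℂ) := by
      rw [@inner_self_eq_norm_sq_to_K ℂ]; norm_cast
    rw [expand, ← hvv]
    simp only [hv, inner_sub_left, inner_sub_right, inner_smul_left, inner_smul_right]
    have : ((‖lam‖ ^ 2 : ℝ) : ℂ) = lam * starRingEnd ℂ lam := by
      rw [Complex.mul_conj]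
      norm_cast
      simp [Complex.normSq_eq_norm_sq]
    rw [this]; ring
  rw [hnum_val] at hnum
  rw [hden_val] at hden
  have hb2 : ((‖b‖ ^ 2 : ℝ) : ℂ) ≠ 0 := by
    simpa using pow_ne_zero 2 (norm_ne_zero_iff.mpr hg)
  have := hnum.div hden hb2
  convert this using 2
  · simp [Pi.div_apply]
  push_cast
  ring
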